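/- For every n and every k with n − 3 ≤ k ≤ n − 1, the k-skeleton of the simplex on vertex set [n] — the pure k-dimensional simplicial complex whose facets are all (k+1)-element subsets of [n] — is extendably shellable. -/

import Mathlib

open Finset

/-- `F 0, F 1, …` is a shelling order: for all `i < j` there are `ℓ < j` and `v ∈ F j`
with `F i ∩ F j ⊆ F ℓ ∩ F j = F j \ {v}`. -/
def IsShellingOrder (n s : ℕ) (F : Fin s → Finset (Fin n)) : Prop :=
  ∀ j i : Fin s, i < j → ∃ ℓ : Fin s, ℓ < j ∧ ∃ v ∈ F j,
    F i ∩ F j ⊆ F ℓ ∩ F j ∧ F ℓ ∩ F j = (F j).erase v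

/-- A family of facets `𝓕` is extendably shellable: every shelling order of a subset of
the facets can be continued, using the remaining facets, to a shelling order of all
facets of `𝓕`. -/
def ExtendablyShellable (n : ℕ) (𝓕 : Finset (Finset (Fin n))) : Prop :=
  ∀ (s : ℕ) (F : Fin s → Finset (Fin n)), Function.Injective F → (∀ i, F i ∈ 𝓕) →
    IsShellingOrder n s F →
    ∃ (t : ℕ) (hst : s ≤ t) (G : Fin t → Finset (Fin n)), Function.Injective G ∧
      (∀ i, G i ∈ 𝓕) ∧ (∀ A ∈ 𝓕, ∃ i, G i = A) ∧ IsShellingOrder n t G ∧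
      ∀ i : Fin s, G (Fin.castLE hst i) = F i

namespace SkelAux
variable {V : Type*} [DecidableEq V]

def nbr (E : Finset (Finset V)) (W : Finset V) (x : V) : Finset V :=
  W.filter fun y => y ≠ x ∧ ({x, y} : Finset V) ∈ E

def IsCliq (E : Finset (Finset V)) (K : Finset V) : Prop :=
  ∀ a ∈ K, ∀ b ∈ K, a ≠ b → ({a, b} : Finset V) ∈ E

def SimpVx (E : Finset (Finset V)) (W : Finset V) (v : V) : Prop :=
  IsCliq E (nbr E W v)

def J2 (E : Finset (Finset V)) (W : Finset V) : Prop :=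
  ∀ W' ⊆ W, IsCliq E W' ∨
    ∃ u ∈ W', ∃ v ∈ W', u ≠ v ∧ ({u, v} : Finset V) ∉ E ∧ SimpVx E W' u ∧ SimpVx E W' v

def SimpEdge (E : Finset (Finset V)) (W : Finset V) (x y : V) : Prop :=
  x ∈ W ∧ y ∈ W ∧ x ≠ y ∧ ({x, y} : Finset V) ∈ E ∧ IsCliq E (nbr E W x ∩ nbr E W y)

lemma mem_nbr {E : Finset (Finset V)} {W : Finset V} {x y : V} :
    y ∈ nbr E W x ↔ y ∈ W ∧ y ≠ x ∧ ({x, y} : Finset V) ∈ E := by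
  simp [nbr]

lemma nbr_subset (E : Finset (Finset V)) (W : Finset V) (x : V) : nbr E W x ⊆ W :=
  filter_subset _ _

lemma not_self_mem_nbr (E : Finset (Finset V)) (W : Finset V) (x : V) : x ∉ nbr E W x := by
  simp [mem_nbr]

lemma mem_nbr_symm {E : Finset (Finset V)} {W : Finset V} {x y : V}
    (h : y ∈ nbr E W x) (hx : x ∈ W) : x ∈ nbr E W y := by
  rw [mem_nbr] at h ⊢
  refine ⟨hx, fun he => h.2.1 he.symm, ?_⟩
  rw [Finset.pair_comm y x]
  exact h.2.2

lemma pair_eq_of_eq {a b x y : V} (hab : a ≠ b) (h : ({a, b} : Finset V) = {x, y}) :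
    (a = x ∧ b = y) ∨ (a = y ∧ b = x) := by
  have ha : a ∈ ({x, y} : Finset V) := h ▸ (by simp)
  have hb : b ∈ ({x, y} : Finset V) := h ▸ (by simp)
  simp only [mem_insert, mem_singleton] at ha hb
  rcases ha with rfl | rfl
  · rcases hb with rfl | rfl
    · exact absurd rfl hab
    · exact Or.inl ⟨rfl, rfl⟩
  · rcases hb with rfl | rfl
    · exact Or.inr ⟨rfl, rfl⟩
    · exact absurd rfl hab

lemma pair_ne_of_not_mem {a b x y : V} (hx : a ≠ x) (hy : a ≠ y) :
    ({a, b} : Finset V) ≠ {x, y} := by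
  intro h
  have ha : a ∈ ({x, y} : Finset V) := h ▸ (by simp)
  simp only [mem_insert, mem_singleton] at ha
  tauto

lemma IsCliq.subset {E : Finset (Finset V)} {K K' : Finset V} (h : IsCliq E K)
    (hs : K' ⊆ K) : IsCliq E K' :=
  fun a ha b hb hab => h a (hs ha) b (hs hb) hab

lemma IsCliq.erase_edge {E : Finset (Finset V)} {K : Finset V} {x y : V}
    (h : IsCliq E K) (hxy : x ∉ K ∨ y ∉ K) : IsCliq (E.erase {x, y}) K := by
  intro a ha b hb hab
  refine Finset.mem_erase.mpr ⟨?_, h a ha b hb hab⟩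
  intro hpair
  rcases pair_eq_of_eq hab hpair with ⟨rfl, rfl⟩ | ⟨rfl, rfl⟩
  · tauto
  · tauto

lemma nbr_erase_edge_of_ne {E : Finset (Finset V)} {W : Finset V} {x y v : V}
    (hvx : v ≠ x) (hvy : v ≠ y) : nbr (E.erase {x, y}) W v = nbr E W v := by
  ext z
  simp only [mem_nbr, Finset.mem_erase]
  constructor
  · rintro ⟨h1, h2, _, h4⟩; exact ⟨h1, h2, h4⟩
  · rintro ⟨h1, h2, h4⟩
    exact ⟨h1, h2, pair_ne_of_not_mem hvx hvy, h4⟩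

lemma nbr_erase_edge_left {E : Finset (Finset V)} {W : Finset V} {x y : V} (hxy : x ≠ y) :
    nbr (E.erase {x, y}) W x = (nbr E W x).erase y := by
  ext z
  simp only [mem_nbr, Finset.mem_erase]
  constructor
  · rintro ⟨h1, h2, h3, h4⟩
    refine ⟨fun hzy => h3 ?_, h1, h2, h4⟩
    subst hzy; rfl
  · rintro ⟨hzy, h1, h2, h4⟩
    refine ⟨h1, h2, fun hp => hzy ?_, h4⟩
    rcases pair_eq_of_eq (fun h => h2 h.symm) hp with ⟨_, h⟩ | ⟨hxx, h⟩
    · exact h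
    · exact absurd hxx hxy

lemma nbr_erase_vx {E : Finset (Finset V)} {W : Finset V} {s v : V} :
    nbr E (W.erase s) v = (nbr E W v).erase s := by
  ext z
  simp only [mem_nbr, Finset.mem_erase]
  tauto

lemma J2.mono {E : Finset (Finset V)} {W W' : Finset V} (h : J2 E W) (hs : W' ⊆ W) :
    J2 E W' := fun W'' hW'' => h W'' (hW''.trans hs)

lemma simpvx_endpoint {E : Finset (Finset V)} {W : Finset V} {x y : V}
    (hxy : x ≠ y) (h : IsCliq E (nbr E W x)) : SimpVx (E.erase {x, y}) W x := by
  unfold SimpVx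
  rw [nbr_erase_edge_left hxy]
  exact (h.subset (erase_subset _ _)).erase_edge (Or.inr (notMem_erase _ _))

/-- Key lemma: erasing a simplicial edge from a J2 graph leaves two nonadjacent
simplicial vertices. -/
theorem keyLemma : ∀ (m : ℕ) (E : Finset (Finset V)) (W : Finset V) (x y : V),
    W.card ≤ m → J2 E W → SimpEdge E W x y →
    ∃ u ∈ W, ∃ v ∈ W, u ≠ v ∧ ({u, v} : Finset V) ∉ E.erase {x, y} ∧
      SimpVx (E.erase {x, y}) W u ∧ SimpVx (E.erase {x, y}) W v := by
  -- endpoint case handled via an auxiliary argument inside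
  intro m
  induction m with
  | zero =>
    intro E W x y hcard _ hse
    have : x ∈ W := hse.1
    have : W.card ≠ 0 := Finset.card_ne_zero_of_mem this
    omega
  | succ m ih =>
    intro E W x y hcard hJ hse
    obtain ⟨hxW, hyW, hxy, hxyE, hC⟩ := hse
    set E' := E.erase ({x, y} : Finset V) with hE'def
    -- endpoint subcase as a reusable statement (for s = x; apply symmetrically for y)
    have endpoint : ∀ (x y : V), x ∈ W → y ∈ W → x ≠ y → ({x, y} : Finset V) ∈ E →
        IsCliq E (nbr E W x) →
        ∃ u ∈ W, ∃ v ∈ W, u ≠ v ∧ ({u, v} : Finset V) ∉ E.erase {x, y} ∧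
          SimpVx (E.erase {x, y}) W u ∧ SimpVx (E.erase {x, y}) W v := by
      intro x y hxW hyW hxy hxyE hxsimp
      have hx' : SimpVx (E.erase {x, y}) W x := simpvx_endpoint hxy hxsimp
      have hxcl' : IsCliq (E.erase {x, y}) (nbr (E.erase {x, y}) W x) := hx'
      -- helper to finish given a suitable partner w
      have finish : ∀ w, w ∈ W → w ≠ x → w ∉ nbr (E.erase {x, y}) W x →
          SimpVx E (W.erase x) w →
          ∃ u ∈ W, ∃ v ∈ W, u ≠ v ∧ ({u, v} : Finset V) ∉ E.erase {x, y} ∧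
            SimpVx (E.erase {x, y}) W u ∧ SimpVx (E.erase {x, y}) W v := by
        intro w hwW hwx hwnadj hwsimp
        have hwx_pair : ({w, x} : Finset V) ∉ E.erase {x, y} := by
          intro hmem
          refine hwnadj (mem_nbr.mpr ⟨hwW, hwx, ?_⟩)
          rw [Finset.pair_comm x w]
          exact hmem
        have hkey : nbr (E.erase {x, y}) W w = nbr E (W.erase x) w := by
          have h1 : nbr (E.erase {x, y}) (W.erase x) w = nbr E (W.erase x) w := by
            by_cases hwy : w = y
            · subst hwy
              have heq : E.erase ({x, w} : Finset V) = E.erase {w, x} := by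
                rw [Finset.pair_comm x w]
              rw [heq, nbr_erase_edge_left hwx]
              refine Finset.erase_eq_of_notMem ?_
              intro hmem
              exact (Finset.mem_erase.mp ((nbr_subset E (W.erase x) w) hmem)).1 rfl
            · exact nbr_erase_edge_of_ne hwx hwy
          have h2 : nbr (E.erase {x, y}) (W.erase x) w = nbr (E.erase {x, y}) W w := by
            rw [nbr_erase_vx]
            refine Finset.erase_eq_of_notMem ?_
            intro hmem
            exact hwnadj (mem_nbr_symm hmem hwW)
          rw [← h2, h1]
        refine ⟨w, hwW, x, hxW, hwx, hwx_pair, ?_, hx'⟩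
        · unfold SimpVx
          rw [hkey]
          have hcl : IsCliq E (nbr E (W.erase x) w) := hwsimp
          refine hcl.erase_edge (Or.inl ?_)
          intro hmem
          exact (Finset.mem_erase.mp ((nbr_subset E (W.erase x) w) hmem)).1 rfl
      rcases hJ (W.erase x) (erase_subset _ _) with hcl | ⟨w1, hw1, w2, hw2, hne, hnadj, hs1, hs2⟩
      · -- W minus x is complete: partner y
        refine ⟨x, hxW, y, hyW, hxy, notMem_erase _ _, hx', ?_⟩
        unfold SimpVx
        have h1 : nbr (E.erase {x, y}) W y = nbr E (W.erase x) y := by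
          have hyx : E.erase ({x, y} : Finset V) = E.erase {y, x} := by rw [Finset.pair_comm]
          rw [hyx, nbr_erase_edge_left hxy.symm, ← nbr_erase_vx]
        rw [h1]
        have hsub : nbr E (W.erase x) y ⊆ W.erase x := nbr_subset _ _ _
        refine (hcl.subset hsub).erase_edge (Or.inl ?_)
        intro hmem
        exact (Finset.mem_erase.mp (hsub hmem)).1 rfl
      · -- two nonadjacent simplicial vertices in W - x; not both adjacent to x
        have hnot_both : ¬(w1 ∈ nbr (E.erase {x, y}) W x ∧ w2 ∈ nbr (E.erase {x, y}) W x) := by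
          rintro ⟨h1, h2⟩
          have := hxcl' w1 h1 w2 h2 hne
          exact hnadj (Finset.mem_of_mem_erase this)
        have hw1W : w1 ∈ W := Finset.mem_of_mem_erase hw1
        have hw2W : w2 ∈ W := Finset.mem_of_mem_erase hw2
        by_cases h1 : w1 ∈ nbr (E.erase {x, y}) W x
        · have h2 : w2 ∉ nbr (E.erase {x, y}) W x := fun h => hnot_both ⟨h1, h⟩
          exact finish w2 hw2W (Finset.mem_erase.mp hw2).1 h2 hs2
        · exact finish w1 hw1W (Finset.mem_erase.mp hw1).1 h1 hs1
    -- main case analysis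
    rcases hJ W (Finset.Subset.refl W) with hclW | ⟨u, huW, v, hvW, huv, huvE, hu, hv⟩
    · -- W complete
      exact endpoint x y hxW hyW hxy hxyE (hclW.subset (nbr_subset _ _ _))
    · -- get a simplicial vertex not in the common neighborhood C
      have hnot_both : ¬(u ∈ nbr E W x ∩ nbr E W y ∧ v ∈ nbr E W x ∩ nbr E W y) := by
        rintro ⟨h1, h2⟩
        exact huvE (hC u h1 v h2 huv)
      obtain ⟨s, hsW, hssimp, hsC⟩ : ∃ s, s ∈ W ∧ SimpVx E W s ∧ s ∉ nbr E W x ∩ nbr E W y := by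
        by_cases h : u ∈ nbr E W x ∩ nbr E W y
        · exact ⟨v, hvW, hv, fun hv' => hnot_both ⟨h, hv'⟩⟩
        · exact ⟨u, huW, hu, h⟩
      by_cases hsx : s = x
      · subst hsx; exact endpoint s y hsW hyW hxy hxyE hssimp
      by_cases hsy : s = y
      · subst hsy
        have hres := endpoint s x hsW hxW hxy.symm (by rwa [Finset.pair_comm]) hssimp
        rw [Finset.pair_comm s x] at hres
        exact hres
      -- s is not an endpoint: use induction hypothesis on W - s
      have hcard' : (W.erase s).card ≤ m := by
        rw [Finset.card_erase_of_mem hsW]; omega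
      have hJ' : J2 E (W.erase s) := hJ.mono (erase_subset _ _)
      have hse' : SimpEdge E (W.erase s) x y := by
        refine ⟨Finset.mem_erase.mpr ⟨fun h => hsx h.symm, hxW⟩,
          Finset.mem_erase.mpr ⟨fun h => hsy h.symm, hyW⟩, hxy, hxyE, ?_⟩
        refine hC.subset ?_
        intro z hz
        rw [nbr_erase_vx, nbr_erase_vx] at hz
        simp only [Finset.mem_inter, Finset.mem_erase] at hz ⊢
        exact ⟨hz.1.2, hz.2.2⟩
      obtain ⟨w1, hw1, w2, hw2, hne, hnadj, hs1, hs2⟩ := ih E (W.erase s) x y hcard' hJ' hse'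
      -- not both adjacent to s in E'
      have hnbrs : nbr E' W s = nbr E W s := nbr_erase_edge_of_ne hsx hsy
      have hscl' : IsCliq E' (nbr E' W s) := by
        rw [hnbrs]
        refine hssimp.erase_edge ?_
        by_cases hx' : x ∈ nbr E W s
        · refine Or.inr ?_
          intro hy'
          exact hsC (Finset.mem_inter.mpr ⟨mem_nbr_symm hx' hsW, mem_nbr_symm hy' hsW⟩)
        · exact Or.inl hx'
      have hnot_both2 : ¬(w1 ∈ nbr E' W s ∧ w2 ∈ nbr E' W s) := by
        rintro ⟨h1, h2⟩
        exact hnadj (hscl' w1 h1 w2 h2 hne)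
      have finish2 : ∀ w, w ∈ W.erase s → SimpVx E' (W.erase s) w → w ∉ nbr E' W s →
          ∃ u ∈ W, ∃ v ∈ W, u ≠ v ∧ ({u, v} : Finset V) ∉ E.erase {x, y} ∧
            SimpVx (E.erase {x, y}) W u ∧ SimpVx (E.erase {x, y}) W v := by
        intro w hw hwsimp hwnadj
        have hwW : w ∈ W := Finset.mem_of_mem_erase hw
        have hws : w ≠ s := (Finset.mem_erase.mp hw).1
        have hwpair : ({w, s} : Finset V) ∉ E' := by
          intro hmem
          exact hwnadj (mem_nbr.mpr ⟨hwW, hws, by rwa [Finset.pair_comm]⟩)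
        refine ⟨w, hwW, s, hsW, hws, hwpair, ?_, hscl'⟩
        unfold SimpVx
        have : nbr E' W w = nbr E' (W.erase s) w := by
          rw [nbr_erase_vx]
          refine (Finset.erase_eq_of_notMem ?_).symm
          intro hmem
          exact hwnadj (mem_nbr_symm hmem hwW)
        rw [this]
        exact hwsimp
      by_cases h1 : w1 ∈ nbr E' W s
      · exact finish2 w2 hw2 hs2 (fun h => hnot_both2 ⟨h1, h⟩)
      · exact finish2 w1 hw1 hs1 h1


lemma nbr_mono {E : Finset (Finset V)} {W W' : Finset V} (h : W' ⊆ W) (x : V) :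
    nbr E W' x ⊆ nbr E W x := by
  intro z hz
  rw [mem_nbr] at hz ⊢
  exact ⟨h hz.1, hz.2⟩

lemma nbr_erase_edge_of_not_both {E : Finset (Finset V)} {W' : Finset V} {x y : V}
    (hnot : ¬(x ∈ W' ∧ y ∈ W')) (u : V) (huW : u ∈ W') :
    nbr (E.erase {x, y}) W' u = nbr E W' u := by
  ext z
  simp only [mem_nbr, Finset.mem_erase]
  constructor
  · rintro ⟨h1, h2, _, h4⟩; exact ⟨h1, h2, h4⟩
  · rintro ⟨h1, h2, h4⟩
    refine ⟨h1, h2, fun hp => ?_, h4⟩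
    rcases pair_eq_of_eq (fun he => h2 he.symm) hp with ⟨rfl, rfl⟩ | ⟨rfl, rfl⟩
    · exact hnot ⟨huW, h1⟩
    · exact hnot ⟨h1, huW⟩

/-- Erasing a simplicial edge preserves the J2 invariant. -/
theorem J2.erase_simpEdge {E : Finset (Finset V)} {W : Finset V} {x y : V}
    (hJ : J2 E W) (hse : SimpEdge E W x y) : J2 (E.erase {x, y}) W := by
  intro W' hW'
  obtain ⟨hxW, hyW, hxy, hxyE, hC⟩ := hse
  by_cases hboth : x ∈ W' ∧ y ∈ W'
  · right
    have hse' : SimpEdge E W' x y := by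
      refine ⟨hboth.1, hboth.2, hxy, hxyE, hC.subset ?_⟩
      exact Finset.inter_subset_inter (nbr_mono hW' x) (nbr_mono hW' y)
    obtain ⟨u, hu, v, hv, hne, hnadj, h1, h2⟩ :=
      keyLemma W'.card E W' x y le_rfl (hJ.mono hW') hse'
    exact ⟨u, hu, v, hv, hne, hnadj, h1, h2⟩
  · rcases hJ W' hW' with hcl | ⟨u, hu, v, hv, hne, hnadj, h1, h2⟩
    · left
      refine hcl.erase_edge ?_
      by_cases hx : x ∈ W'
      · exact Or.inr (fun hy => hboth ⟨hx, hy⟩)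
      · exact Or.inl hx
    · right
      refine ⟨u, hu, v, hv, hne, fun hmem => hnadj (Finset.mem_of_mem_erase hmem), ?_, ?_⟩
      · unfold SimpVx
        rw [nbr_erase_edge_of_not_both hboth u hu]
        refine h1.erase_edge ?_
        by_cases hx : x ∈ W'
        · exact Or.inr (fun hy => hboth ⟨hx, (nbr_subset E W' u) hy⟩)
        · exact Or.inl (fun hx' => hx ((nbr_subset E W' u) hx'))
      · unfold SimpVx
        rw [nbr_erase_edge_of_not_both hboth v hv]
        refine h2.erase_edge ?_
        by_cases hx : x ∈ W'
        · exact Or.inr (fun hy => hboth ⟨hx, (nbr_subset E W' v) hy⟩)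
        · exact Or.inl (fun hx' => hx ((nbr_subset E W' v) hx'))

/-- A J2 graph with an edge has a simplicial edge. -/
theorem J2.exists_simpEdge {E : Finset (Finset V)} {W : Finset V} (hJ : J2 E W)
    {a b : V} (hab : a ≠ b) (haW : a ∈ W) (hbW : b ∈ W) (habE : ({a, b} : Finset V) ∈ E) :
    ∃ x y, SimpEdge E W x y := by
  classical
  set W₀ := W.filter (fun v => (nbr E W v).Nonempty) with hW₀def
  have hW₀sub : W₀ ⊆ W := filter_subset _ _
  have hclosure : ∀ v ∈ W₀, ∀ z ∈ nbr E W v, z ∈ W₀ := by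
    intro v hv z hz
    have hzW : z ∈ W := (nbr_subset E W v) hz
    have hvW : v ∈ W := hW₀sub hv
    refine Finset.mem_filter.mpr ⟨hzW, ⟨v, mem_nbr_symm hz hvW⟩⟩
  have hnbr_eq : ∀ v ∈ W₀, nbr E W v = nbr E W₀ v := by
    intro v hv
    apply Finset.Subset.antisymm
    · intro z hz
      rw [mem_nbr] at hz ⊢
      exact ⟨hclosure v hv z (mem_nbr.mpr hz), hz.2⟩
    · exact nbr_mono hW₀sub v
  have haW₀ : a ∈ W₀ := by
    refine Finset.mem_filter.mpr ⟨haW, ⟨b, ?_⟩⟩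
    exact mem_nbr.mpr ⟨hbW, hab.symm, habE⟩
  have hbW₀ : b ∈ W₀ := by
    refine Finset.mem_filter.mpr ⟨hbW, ⟨a, ?_⟩⟩
    refine mem_nbr.mpr ⟨haW, hab, ?_⟩
    rw [Finset.pair_comm b a]
    exact habE
  rcases hJ W₀ hW₀sub with hcl | ⟨u, hu, v, hv, hne, hnadj, h1, h2⟩
  · refine ⟨a, b, haW, hbW, hab, habE, ?_⟩
    refine hcl.subset ?_
    intro z hz
    exact hclosure a haW₀ z (Finset.mem_of_mem_inter_left hz)
  · have huW : u ∈ W := hW₀sub hu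
    have hnon : (nbr E W u).Nonempty := (Finset.mem_filter.mp hu).2
    obtain ⟨z, hz⟩ := hnon
    have hzmem := mem_nbr.mp hz
    refine ⟨u, z, huW, hzmem.1, fun he => hzmem.2.1 he.symm, hzmem.2.2, ?_⟩
    have : IsCliq E (nbr E W₀ u) := h1
    rw [← hnbr_eq u hu] at this
    exact this.subset (Finset.inter_subset_left)

/-- The complete graph satisfies J2. -/
theorem J2_of_complete {E : Finset (Finset V)} {W : Finset V}
    (hcompl : ∀ a ∈ W, ∀ b ∈ W, a ≠ b → ({a, b} : Finset V) ∈ E) : J2 E W :=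
  fun W' hW' => Or.inl (fun a ha b hb hab => hcompl a (hW' ha) b (hW' hb) hab)



lemma isShellingOrder_snoc {n s : ℕ} {F : Fin s → Finset (Fin n)} {A : Finset (Fin n)}
    (hF : IsShellingOrder n s F)
    (hnew : ∀ i : Fin s, ∃ ℓ : Fin s, ∃ v ∈ A, F i ∩ A ⊆ F ℓ ∩ A ∧ F ℓ ∩ A = A.erase v) :
    IsShellingOrder n (s + 1) (Fin.snoc F A) := by
  intro j i hij
  rcases Fin.eq_castSucc_or_eq_last j with ⟨j', rfl⟩ | rfl
  · have hilt : (i : ℕ) < s := lt_of_lt_of_le hij (by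
      simpa using Nat.lt_succ_iff.mp j'.castSucc.isLt)
    -- i as castSucc
    rcases Fin.eq_castSucc_or_eq_last i with ⟨i', rfl⟩ | rfl
    · obtain ⟨ℓ, hℓ, v, hv, hsub, herase⟩ := hF j' i' (by
        simpa [Fin.castSucc_lt_castSucc_iff] using hij)
      refine ⟨ℓ.castSucc, by simpa [Fin.castSucc_lt_castSucc_iff] using hℓ, v, ?_, ?_, ?_⟩
      · simpa [Fin.snoc_castSucc] using hv
      · simpa [Fin.snoc_castSucc] using hsub
      · simpa [Fin.snoc_castSucc] using herase
    · exfalso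
      have := Fin.lt_last_iff_ne_last.mp (lt_of_lt_of_le hij (Fin.le_last _))
      exact this rfl
  · rcases Fin.eq_castSucc_or_eq_last i with ⟨i', rfl⟩ | rfl
    · obtain ⟨ℓ, v, hv, hsub, herase⟩ := hnew i'
      refine ⟨ℓ.castSucc, Fin.castSucc_lt_last ℓ, v, ?_, ?_, ?_⟩
      · simpa [Fin.snoc_last] using hv
      · simpa [Fin.snoc_castSucc, Fin.snoc_last] using hsub
      · simpa [Fin.snoc_castSucc, Fin.snoc_last] using herase
    · exact absurd hij (lt_irrefl _)

lemma snoc_injective {n s : ℕ} {F : Fin s → Finset (Fin n)} {A : Finset (Fin n)}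
    (hinj : Function.Injective F) (hnew : ∀ i, F i ≠ A) :
    Function.Injective (Fin.snoc F A : Fin (s + 1) → Finset (Fin n)) := by
  intro a b hab
  rcases Fin.eq_castSucc_or_eq_last a with ⟨a', rfl⟩ | rfl <;>
    rcases Fin.eq_castSucc_or_eq_last b with ⟨b', rfl⟩ | rfl
  · simp only [Fin.snoc_castSucc] at hab
    exact congrArg _ (hinj hab)
  · simp only [Fin.snoc_castSucc, Fin.snoc_last] at hab
    exact absurd hab (hnew a')
  · simp only [Fin.snoc_castSucc, Fin.snoc_last] at hab
    exact absurd hab.symm (hnew b')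
  · rfl

theorem completion {n : ℕ} (𝓕 : Finset (Finset (Fin n)))
    (step : ∀ (s : ℕ) (F : Fin s → Finset (Fin n)), Function.Injective F →
      (∀ i, F i ∈ 𝓕) → IsShellingOrder n s F → s < 𝓕.card →
      ∃ A ∈ 𝓕, (∀ i, F i ≠ A) ∧ IsShellingOrder n (s + 1) (Fin.snoc F A)) :
    ExtendablyShellable n 𝓕 := by
  have base : ∀ (s : ℕ) (F : Fin s → Finset (Fin n)), Function.Injective F →
      (∀ i, F i ∈ 𝓕) → IsShellingOrder n s F → 𝓕.card ≤ s →
      ∃ (t : ℕ) (hst : s ≤ t) (G : Fin t → Finset (Fin n)), Function.Injective G ∧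
        (∀ i, G i ∈ 𝓕) ∧ (∀ A ∈ 𝓕, ∃ i, G i = A) ∧ IsShellingOrder n t G ∧
        ∀ i : Fin s, G (Fin.castLE hst i) = F i := by
    intro s F hinj hmem hshell hcard
    have himsub : Finset.univ.image F ⊆ 𝓕 := by
      intro a ha
      simp only [Finset.mem_image] at ha
      obtain ⟨i, _, rfl⟩ := ha
      exact hmem i
    have himcard : (Finset.univ.image F).card = s := by
      rw [Finset.card_image_of_injective _ hinj, Finset.card_univ, Fintype.card_fin]
    have heq : Finset.univ.image F = 𝓕 :=
      Finset.eq_of_subset_of_card_le himsub (by omega)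
    refine ⟨s, le_rfl, F, hinj, hmem, ?_, hshell, fun i => rfl⟩
    intro A hA
    rw [← heq] at hA
    simp only [Finset.mem_image] at hA
    obtain ⟨i, _, hi⟩ := hA
    exact ⟨i, hi⟩
  have aux : ∀ (d s : ℕ) (F : Fin s → Finset (Fin n)), Function.Injective F →
      (∀ i, F i ∈ 𝓕) → IsShellingOrder n s F → 𝓕.card - s ≤ d →
      ∃ (t : ℕ) (hst : s ≤ t) (G : Fin t → Finset (Fin n)), Function.Injective G ∧
        (∀ i, G i ∈ 𝓕) ∧ (∀ A ∈ 𝓕, ∃ i, G i = A) ∧ IsShellingOrder n t G ∧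
        ∀ i : Fin s, G (Fin.castLE hst i) = F i := by
    intro d
    induction d with
    | zero =>
      intro s F hinj hmem hshell hd
      exact base s F hinj hmem hshell (by omega)
    | succ d ihd =>
      intro s F hinj hmem hshell hd
      by_cases hlt : s < 𝓕.card
      · obtain ⟨A, hA, hnew, hshell'⟩ := step s F hinj hmem hshell hlt
        obtain ⟨t, hst', G, hG1, hG2, hG3, hG4, hG5⟩ :=
          ihd (s + 1) (Fin.snoc F A) (snoc_injective hinj hnew)
            (fun i => by
              rcases Fin.eq_castSucc_or_eq_last i with ⟨i', rfl⟩ | rfl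
              · simpa [Fin.snoc_castSucc] using hmem i'
              · simpa [Fin.snoc_last] using hA)
            hshell' (by omega)
        refine ⟨t, Nat.le_of_succ_le hst', G, hG1, hG2, hG3, hG4, ?_⟩
        intro i
        have h1 : Fin.castLE (Nat.le_of_succ_le hst') i = Fin.castLE hst' i.castSucc := by
          apply Fin.ext; rfl
        rw [h1, hG5 i.castSucc, Fin.snoc_castSucc]
      · exact base s F hinj hmem hshell (by omega)
  intro s F hinj hmem hshell
  exact aux (𝓕.card - s) s F hinj hmem hshell le_rfl



lemma exists_fresh {n s : ℕ} {𝓕 : Finset (Finset (Fin n))} (F : Fin s → Finset (Fin n))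
    (hlt : s < 𝓕.card) : ∃ A ∈ 𝓕, ∀ i, F i ≠ A := by
  by_contra hcon
  push_neg at hcon
  have hsub : 𝓕 ⊆ Finset.univ.image F := by
    intro A hA
    obtain ⟨i, hi⟩ := hcon A hA
    exact Finset.mem_image.mpr ⟨i, Finset.mem_univ i, hi⟩
  have := Finset.card_le_card hsub
  have h2 := Finset.card_image_le (s := (Finset.univ : Finset (Fin s))) (f := F)
  simp only [Finset.card_univ, Fintype.card_fin] at h2
  omega

/-- For (n-1)-element subsets of `univ`, any two distinct members intersect in a
"facet minus a vertex" of the second. -/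
lemma m1_inter {n : ℕ} {A B : Finset (Fin n)}
    (hA : A ∈ Finset.powersetCard (n - 1) (Finset.univ : Finset (Fin n)))
    (hB : B ∈ Finset.powersetCard (n - 1) (Finset.univ : Finset (Fin n)))
    (hAB : A ≠ B) : ∃ v ∈ B, A ∩ B = B.erase v := by
  rw [Finset.mem_powersetCard] at hA hB
  obtain ⟨hA1, hA2⟩ := hA
  obtain ⟨hB1, hB2⟩ := hB
  have hn1 : 2 ≤ n := by
    by_contra h
    have hn0 : n - 1 = 0 := by omega
    apply hAB
    have : A = ∅ := Finset.card_eq_zero.mp (by omega)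
    have : B = ∅ := Finset.card_eq_zero.mp (by omega)
    simp_all
  have hBA : (B \ A).Nonempty := by
    rw [Finset.sdiff_nonempty]
    intro hsub
    exact hAB (Finset.eq_of_subset_of_card_le hsub (by omega)).symm
  have hABc : (A ∩ B).card = n - 2 := by
    have hu : (A ∪ B).card ≤ n := by
      calc (A ∪ B).card ≤ (Finset.univ : Finset (Fin n)).card :=
            Finset.card_le_card (by simp)
        _ = n := by simp
    have hsum := Finset.card_union_add_card_inter A B
    have hne : A ∩ B ≠ B := by
      intro h
      exact hAB (Finset.eq_of_subset_of_card_le (h ▸ Finset.inter_subset_left)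
        (by omega)).symm
    have hle' : (A ∩ B).card ≤ B.card := Finset.card_le_card Finset.inter_subset_right
    have hltB : (A ∩ B).card ≠ B.card := by
      intro h
      exact hne (Finset.eq_of_subset_of_card_le Finset.inter_subset_right (le_of_eq h.symm))
    omega
  have hcard1 : (B \ A).card = 1 := by
    have := Finset.card_sdiff_add_card_inter B A
    rw [Finset.inter_comm] at this
    omega
  obtain ⟨v, hv⟩ := Finset.card_eq_one.mp hcard1
  have hvB : v ∈ B := by
    have : v ∈ B \ A := hv ▸ Finset.mem_singleton_self v
    exact (Finset.mem_sdiff.mp this).1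
  refine ⟨v, hvB, ?_⟩
  have h1 : B \ (B \ A) = A ∩ B := by
    rw [Finset.sdiff_sdiff_self_left, Finset.inter_comm]
  rw [← h1, hv, ← Finset.erase_eq]

lemma m1_shelling {n s : ℕ} (F : Fin s → Finset (Fin n)) (hinj : Function.Injective F)
    (hmem : ∀ i, F i ∈ Finset.powersetCard (n - 1) (Finset.univ : Finset (Fin n))) :
    IsShellingOrder n s F := by
  intro j i hij
  have hne : F i ≠ F j := fun h => (ne_of_lt hij) (hinj h)
  obtain ⟨v, hv, heq⟩ := m1_inter (hmem i) (hmem j) hne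
  exact ⟨i, hij, v, hv, Finset.Subset.refl _, heq⟩


def usedUpTo {n s : ℕ} (P : Fin s → Finset (Fin n)) (j : ℕ) : Finset (Finset (Fin n)) :=
  (Finset.univ.filter (fun i : Fin s => (i : ℕ) < j)).image P

def unusedGraph {n s : ℕ} (P : Fin s → Finset (Fin n)) (j : ℕ) : Finset (Finset (Fin n)) :=
  Finset.powersetCard 2 (Finset.univ : Finset (Fin n)) \ usedUpTo P j

lemma mem_usedUpTo {n s : ℕ} {P : Fin s → Finset (Fin n)} {j : ℕ} {e : Finset (Fin n)} :
    e ∈ usedUpTo P j ↔ ∃ i : Fin s, (i : ℕ) < j ∧ P i = e := by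
  simp only [usedUpTo, Finset.mem_image, Finset.mem_filter, Finset.mem_univ, true_and]

lemma pair_mem_allPairs {n : ℕ} {a b : Fin n} (hab : a ≠ b) :
    ({a, b} : Finset (Fin n)) ∈ Finset.powersetCard 2 (Finset.univ : Finset (Fin n)) :=
  Finset.mem_powersetCard.mpr ⟨Finset.subset_univ _, Finset.card_pair hab⟩

lemma mem_unusedGraph {n s : ℕ} {P : Fin s → Finset (Fin n)} {j : ℕ} {e : Finset (Fin n)} :
    e ∈ unusedGraph P j ↔
      e ∈ Finset.powersetCard 2 (Finset.univ : Finset (Fin n)) ∧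
        ∀ i : Fin s, (i : ℕ) < j → P i ≠ e := by
  simp only [unusedGraph, Finset.mem_sdiff, mem_usedUpTo]
  push_neg
  rfl

lemma compl_link {n : ℕ} {B : Finset (Fin n)} {c v : Fin n} (hc : c ∉ B) (hv : v ∈ B) :
    (Finset.univ \ {c, v}) ∩ B = B.erase v := by
  ext z
  constructor
  · intro hz
    rw [Finset.mem_inter, Finset.mem_sdiff] at hz
    obtain ⟨⟨_, hzne⟩, hzB⟩ := hz
    simp only [Finset.mem_insert, Finset.mem_singleton, not_or] at hzne
    exact Finset.mem_erase.mpr ⟨hzne.2, hzB⟩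
  · intro hz
    obtain ⟨hzv, hzB⟩ := Finset.mem_erase.mp hz
    refine Finset.mem_inter.mpr ⟨Finset.mem_sdiff.mpr ⟨Finset.mem_univ _, ?_⟩, hzB⟩
    simp only [Finset.mem_insert, Finset.mem_singleton, not_or]
    exact ⟨fun h => hc (h ▸ hzB), hzv⟩

lemma m2_step {n k s : ℕ} (hk : k + 1 = n - 2) (hn : 3 ≤ n)
    (F : Fin s → Finset (Fin n)) (P : Fin s → Finset (Fin n))
    (hP : ∀ i, P i = Finset.univ \ F i)
    (hinj : Function.Injective F)
    (hmem : ∀ i, F i ∈ Finset.powersetCard (k + 1) (Finset.univ : Finset (Fin n)))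
    (hshell : IsShellingOrder n s F)
    (hlt : s < (Finset.powersetCard (k + 1) (Finset.univ : Finset (Fin n))).card) :
    ∃ A ∈ Finset.powersetCard (k + 1) (Finset.univ : Finset (Fin n)),
      (∀ i, F i ≠ A) ∧ IsShellingOrder n (s + 1) (Fin.snoc F A) := by
  classical
  have hcardF : ∀ i, (F i).card = n - 2 := by
    intro i
    have h := (Finset.mem_powersetCard.mp (hmem i)).2
    omega
  have hFsub : ∀ i, F i ⊆ Finset.univ := fun i => (Finset.mem_powersetCard.mp (hmem i)).1
  have hFP : ∀ i, F i = Finset.univ \ P i := by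
    intro i
    rw [hP i, Finset.sdiff_sdiff_self_left, Finset.univ_inter]
  have hPcard : ∀ i, (P i).card = 2 := by
    intro i
    rw [hP i, Finset.card_sdiff_of_subset (hFsub i), hcardF i]
    simp only [Finset.card_univ, Fintype.card_fin]
    omega
  have hnotmemF : ∀ (i : Fin s) (z : Fin n), z ∈ F i ↔ z ∉ P i := by
    intro i z
    rw [hP i]
    simp [Finset.mem_sdiff]
  -- the chain: the unused graph satisfies J2 at every stage of the prefix
  have hchain : ∀ j, j ≤ s → J2 (unusedGraph P j) (Finset.univ : Finset (Fin n)) := by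
    intro j
    induction j with
    | zero =>
      intro _
      refine J2_of_complete ?_
      intro a _ b _ hab
      rw [mem_unusedGraph]
      exact ⟨pair_mem_allPairs hab, fun i hi => absurd hi (by omega)⟩
    | succ j ihj =>
      intro hjs1
      have hjs : j < s := by omega
      have hJj := ihj (by omega)
      obtain ⟨x, y, hxy, hxyP⟩ := Finset.card_eq_two.mp (hPcard ⟨j, hjs⟩)
      have hxymem : ({x, y} : Finset (Fin n)) ∈ unusedGraph P j := by
        rw [mem_unusedGraph]
        refine ⟨pair_mem_allPairs hxy, ?_⟩
        intro i hi hPi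
        have hFeq : F i = F ⟨j, hjs⟩ := by
          rw [hFP i, hFP ⟨j, hjs⟩, hPi, hxyP]
        have h5 : (i : ℕ) = j := congrArg Fin.val (hinj hFeq)
        omega
      have hse : SimpEdge (unusedGraph P j) (Finset.univ : Finset (Fin n)) x y := by
        refine ⟨Finset.mem_univ x, Finset.mem_univ y, hxy, hxymem, ?_⟩
        intro u hu w hw huw
        rw [Finset.mem_inter] at hu hw
        obtain ⟨hux, huy⟩ := hu
        obtain ⟨hwx, hwy⟩ := hw
        rw [mem_nbr] at hux huy hwx hwy
        by_contra hcon
        have huwused : ({u, w} : Finset (Fin n)) ∈ usedUpTo P j := by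
          by_contra h2
          exact hcon (Finset.mem_sdiff.mpr ⟨pair_mem_allPairs huw, h2⟩)
        obtain ⟨i0, hi0lt, hPi0⟩ := mem_usedUpTo.mp huwused
        obtain ⟨ℓ, hℓlt, v, hvB, hsub, herase⟩ := hshell ⟨j, hjs⟩ i0 (by
          rw [Fin.lt_def]; exact hi0lt)
        have hvL : v ∉ F ℓ := by
          intro hvL
          have h1 : v ∈ F ℓ ∩ F ⟨j, hjs⟩ := Finset.mem_inter.mpr ⟨hvL, hvB⟩
          rw [herase] at h1
          exact (Finset.mem_erase.mp h1).1 rfl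
        have hvA : v ∉ F i0 := by
          intro hvA
          have h1 : v ∈ F i0 ∩ F ⟨j, hjs⟩ := Finset.mem_inter.mpr ⟨hvA, hvB⟩
          have h2 := hsub h1
          rw [herase] at h2
          exact (Finset.mem_erase.mp h2).1 rfl
        have hvPi0 : v ∈ P i0 := by
          rw [hP i0, Finset.mem_sdiff]
          exact ⟨Finset.mem_univ v, hvA⟩
        have hvPl : v ∈ P ℓ := by
          rw [hP ℓ, Finset.mem_sdiff]
          exact ⟨Finset.mem_univ v, hvL⟩
        have hc1 : ((P ℓ).erase v).card = 1 := by
          rw [Finset.card_erase_of_mem hvPl, hPcard ℓ]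
        obtain ⟨c, hc⟩ := Finset.card_eq_one.mp hc1
        have hcmem : c ∈ (P ℓ).erase v := hc ▸ Finset.mem_singleton_self c
        have hcPl : c ∈ P ℓ := Finset.mem_of_mem_erase hcmem
        have hcv : c ≠ v := (Finset.mem_erase.mp hcmem).1
        have hPleq : P ℓ = {v, c} := by
          rw [← Finset.insert_erase hvPl, hc]
        have hcFl : c ∉ F ℓ := fun h => ((hnotmemF ℓ c).mp h) hcPl
        have hcB : c ∉ F ⟨j, hjs⟩ := by
          intro hcB
          have h1 : c ∈ (F ⟨j, hjs⟩).erase v := Finset.mem_erase.mpr ⟨hcv, hcB⟩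
          rw [← herase] at h1
          exact hcFl (Finset.mem_inter.mp h1).1
        have hcPj : c ∈ ({x, y} : Finset (Fin n)) := by
          rw [← hxyP, hP ⟨j, hjs⟩, Finset.mem_sdiff]
          exact ⟨Finset.mem_univ c, hcB⟩
        -- {v, c} is one of the four cross pairs, all of which are unused
        have hvuw : v ∈ ({u, w} : Finset (Fin n)) := hPi0 ▸ hvPi0
        have hPlmem : P ℓ ∈ unusedGraph P j := by
          rw [hPleq]
          simp only [Finset.mem_insert, Finset.mem_singleton] at hvuw hcPj
          rcases hvuw with rfl | rfl <;> rcases hcPj with rfl | rfl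
          · rw [Finset.pair_comm]; exact hux.2.2
          · rw [Finset.pair_comm]; exact huy.2.2
          · rw [Finset.pair_comm]; exact hwx.2.2
          · rw [Finset.pair_comm]; exact hwy.2.2
        have hPlused : P ℓ ∈ usedUpTo P j :=
          mem_usedUpTo.mpr ⟨ℓ, by rw [Fin.lt_def] at hℓlt; exact hℓlt, rfl⟩
        exact (Finset.mem_sdiff.mp hPlmem).2 hPlused
      have hstep : unusedGraph P (j + 1) = (unusedGraph P j).erase {x, y} := by
        have h1 : usedUpTo P (j + 1) = insert (P ⟨j, hjs⟩) (usedUpTo P j) := by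
          rw [usedUpTo, usedUpTo]
          have h2 : Finset.univ.filter (fun i : Fin s => (i : ℕ) < j + 1)
              = insert ⟨j, hjs⟩ (Finset.univ.filter (fun i : Fin s => (i : ℕ) < j)) := by
            ext i
            simp only [Finset.mem_filter, Finset.mem_univ, true_and, Finset.mem_insert,
              Fin.ext_iff]
            omega
          rw [h2, Finset.image_insert]
        rw [unusedGraph, h1, Finset.sdiff_insert, hxyP]
        rfl
      rw [hstep]
      exact hJj.erase_simpEdge hse
  -- extract a simplicial edge from the final unused graph
  have hJs := hchain s le_rfl
  have husedcard : (usedUpTo P s).card ≤ s := by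
    calc (usedUpTo P s).card ≤ (Finset.univ.filter (fun i : Fin s => (i : ℕ) < s)).card :=
          Finset.card_image_le
      _ ≤ (Finset.univ : Finset (Fin s)).card := Finset.card_le_card (Finset.filter_subset _ _)
      _ = s := by simp
  have hcard2 : (Finset.powersetCard (k + 1) (Finset.univ : Finset (Fin n))).card
      = (Finset.powersetCard 2 (Finset.univ : Finset (Fin n))).card := by
    rw [Finset.card_powersetCard, Finset.card_powersetCard]
    simp only [Finset.card_univ, Fintype.card_fin]
    rw [hk]
    exact Nat.choose_symm (by omega)
  have hEne : (unusedGraph P s).Nonempty := by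
    rw [← Finset.card_pos]
    have h3 := Finset.le_card_sdiff (usedUpTo P s)
      (Finset.powersetCard 2 (Finset.univ : Finset (Fin n)))
    rw [unusedGraph]
    omega
  obtain ⟨e, he⟩ := hEne
  have heall := (Finset.mem_sdiff.mp he).1
  obtain ⟨a, b, hab, habe⟩ := Finset.card_eq_two.mp (Finset.mem_powersetCard.mp heall).2
  rw [habe] at he
  obtain ⟨x, y, hse⟩ := hJs.exists_simpEdge hab (Finset.mem_univ a) (Finset.mem_univ b) he
  obtain ⟨_, _, hxy, hxyE, hcliq⟩ := hse
  -- the new facet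
  have hPnot : ∀ i : Fin s, P i ≠ ({x, y} : Finset (Fin n)) := by
    intro i hPi
    exact (mem_unusedGraph.mp hxyE).2 i i.isLt hPi
  have hAmem : Finset.univ \ ({x, y} : Finset (Fin n)) ∈
      Finset.powersetCard (k + 1) (Finset.univ : Finset (Fin n)) := by
    rw [Finset.mem_powersetCard]
    refine ⟨Finset.sdiff_subset, ?_⟩
    rw [Finset.card_sdiff_of_subset (Finset.subset_univ _), Finset.card_pair hxy]
    simp only [Finset.card_univ, Fintype.card_fin]
    omega
  have hcomplA : Finset.univ \ (Finset.univ \ ({x, y} : Finset (Fin n))) = {x, y} := by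
    rw [Finset.sdiff_sdiff_self_left, Finset.univ_inter]
  refine ⟨Finset.univ \ ({x, y} : Finset (Fin n)), hAmem, ?_, ?_⟩
  · intro i hFi
    exact hPnot i (by rw [hP i, hFi, hcomplA])
  · -- shelling order for the extended sequence
    refine isShellingOrder_snoc hshell ?_
    intro i
    obtain ⟨u, w, huw, hPiuw⟩ := Finset.card_eq_two.mp (hPcard i)
    have helper : ∀ (ℓ : Fin s) (c d : Fin n), c ∈ ({x, y} : Finset (Fin n)) →
        d ∈ P i → d ∉ ({x, y} : Finset (Fin n)) → P ℓ = {c, d} →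
        ∃ ℓ' : Fin s, ∃ v ∈ Finset.univ \ ({x, y} : Finset (Fin n)),
          F i ∩ (Finset.univ \ ({x, y} : Finset (Fin n))) ⊆
            F ℓ' ∩ (Finset.univ \ ({x, y} : Finset (Fin n))) ∧
          F ℓ' ∩ (Finset.univ \ ({x, y} : Finset (Fin n))) =
            (Finset.univ \ ({x, y} : Finset (Fin n))).erase v := by
      intro ℓ c d hc hdPi hd2 hPl
      have hdA : d ∈ Finset.univ \ ({x, y} : Finset (Fin n)) :=
        Finset.mem_sdiff.mpr ⟨Finset.mem_univ d, hd2⟩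
      have hcA : c ∉ Finset.univ \ ({x, y} : Finset (Fin n)) := by
        rw [Finset.mem_sdiff]
        push_neg
        intro _
        exact hc
      have heq : F ℓ ∩ (Finset.univ \ ({x, y} : Finset (Fin n))) =
          (Finset.univ \ ({x, y} : Finset (Fin n))).erase d := by
        rw [hFP ℓ, hPl]
        exact compl_link hcA hdA
      refine ⟨ℓ, d, hdA, ?_, heq⟩
      rw [heq]
      intro z hz
      rw [Finset.mem_inter] at hz
      refine Finset.mem_erase.mpr ⟨?_, hz.2⟩
      intro hzd
      exact ((hnotmemF i z).mp hz.1) (hzd ▸ hdPi)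
    by_cases hcap : ∃ c, c ∈ P i ∧ c ∈ ({x, y} : Finset (Fin n))
    · -- P i meets {x, y}: link through F i itself
      obtain ⟨c, hcPi, hcxy⟩ := hcap
      have hPine : P i ≠ ({x, y} : Finset (Fin n)) := hPnot i
      have main : ∀ c d : Fin n, P i = {c, d} → c ∈ ({x, y} : Finset (Fin n)) →
          ∃ ℓ' : Fin s, ∃ v ∈ Finset.univ \ ({x, y} : Finset (Fin n)),
            F i ∩ (Finset.univ \ ({x, y} : Finset (Fin n))) ⊆
              F ℓ' ∩ (Finset.univ \ ({x, y} : Finset (Fin n))) ∧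
            F ℓ' ∩ (Finset.univ \ ({x, y} : Finset (Fin n))) =
              (Finset.univ \ ({x, y} : Finset (Fin n))).erase v := by
        intro c d hPicd hcxy'
        have hdPi : d ∈ P i := by rw [hPicd]; simp
        have hd2 : d ∉ ({x, y} : Finset (Fin n)) := by
          intro hd2
          apply hPnot i
          refine Finset.eq_of_subset_of_card_le ?_ ?_
          · intro z hz
            rw [hPicd] at hz
            simp only [Finset.mem_insert, Finset.mem_singleton] at hz
            rcases hz with rfl | rfl
            · exact hcxy'
            · exact hd2
          · rw [Finset.card_pair hxy, hPcard i]
        exact helper i c d hcxy' hdPi hd2 hPicd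
      rw [hPiuw] at hcPi
      simp only [Finset.mem_insert, Finset.mem_singleton] at hcPi
      rcases hcPi with rfl | rfl
      · exact main c w hPiuw hcxy
      · exact main c u (by rw [hPiuw, Finset.pair_comm]) hcxy
    · -- P i is disjoint from {x, y}
      push_neg at hcap
      have huPi : u ∈ P i := by rw [hPiuw]; simp
      have hwPi : w ∈ P i := by rw [hPiuw]; simp
      have hu2 : u ∉ ({x, y} : Finset (Fin n)) := hcap u huPi
      have hw2 : w ∉ ({x, y} : Finset (Fin n)) := hcap w hwPi
      have hux : u ≠ x := fun h => hu2 (by rw [h]; simp)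
      have huy : u ≠ y := fun h => hu2 (by rw [h]; simp)
      have hwx : w ≠ x := fun h => hw2 (by rw [h]; simp)
      have hwy : w ≠ y := fun h => hw2 (by rw [h]; simp)
      have getused : ∀ (c d : Fin n), c ≠ d → ({c, d} : Finset (Fin n)) ∉ unusedGraph P s →
          ∃ ℓ : Fin s, P ℓ = ({c, d} : Finset (Fin n)) := by
        intro c d hcd hnm
        have : ({c, d} : Finset (Fin n)) ∈ usedUpTo P s := by
          by_contra h2
          exact hnm (Finset.mem_sdiff.mpr ⟨pair_mem_allPairs hcd, h2⟩)
        obtain ⟨ℓ, _, hℓ⟩ := mem_usedUpTo.mp this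
        exact ⟨ℓ, hℓ⟩
      by_cases h1 : ({x, u} : Finset (Fin n)) ∈ unusedGraph P s
      case neg =>
        obtain ⟨ℓ, hPl⟩ := getused x u (fun h => hux h.symm) h1
        exact helper ℓ x u (by simp) huPi hu2 hPl
      by_cases h2 : ({y, u} : Finset (Fin n)) ∈ unusedGraph P s
      case neg =>
        obtain ⟨ℓ, hPl⟩ := getused y u (fun h => huy h.symm) h2
        exact helper ℓ y u (by simp) huPi hu2 hPl
      by_cases h3 : ({x, w} : Finset (Fin n)) ∈ unusedGraph P s
      case neg =>
        obtain ⟨ℓ, hPl⟩ := getused x w (fun h => hwx h.symm) h3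
        exact helper ℓ x w (by simp) hwPi hw2 hPl
      by_cases h4 : ({y, w} : Finset (Fin n)) ∈ unusedGraph P s
      case neg =>
        obtain ⟨ℓ, hPl⟩ := getused y w (fun h => hwy h.symm) h4
        exact helper ℓ y w (by simp) hwPi hw2 hPl
      -- all four cross pairs unused: contradiction with simpliciality
      exfalso
      have humem : u ∈ nbr (unusedGraph P s) (Finset.univ : Finset (Fin n)) x ∩
          nbr (unusedGraph P s) (Finset.univ : Finset (Fin n)) y :=
        Finset.mem_inter.mpr ⟨mem_nbr.mpr ⟨Finset.mem_univ u, hux, h1⟩,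
          mem_nbr.mpr ⟨Finset.mem_univ u, huy, h2⟩⟩
      have hwmem : w ∈ nbr (unusedGraph P s) (Finset.univ : Finset (Fin n)) x ∩
          nbr (unusedGraph P s) (Finset.univ : Finset (Fin n)) y :=
        Finset.mem_inter.mpr ⟨mem_nbr.mpr ⟨Finset.mem_univ w, hwx, h3⟩,
          mem_nbr.mpr ⟨Finset.mem_univ w, hwy, h4⟩⟩
      have := hcliq u humem w hwmem huw
      exact (mem_unusedGraph.mp this).2 i i.isLt hPiuw

end SkelAux



/-- for every `n` and every `k` with `n - 3 ≤ k ≤ n - 1`, the `k`-skeleton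
of the simplex on `[n]`, whose facets are all the `(k+1)`-element subsets of `[n]`, is
extendably shellable. -/
theorem skeleta_extendably_shellable (n k : ℕ) (h1 : n - 3 ≤ k) (h2 : k ≤ n - 1) :
    ExtendablyShellable n
      (Finset.powersetCard (k + 1) (Finset.univ : Finset (Fin n))) := by
  apply SkelAux.completion
  intro s F hinj hmem hshell hlt
  have hcardpc : (Finset.powersetCard (k + 1) (Finset.univ : Finset (Fin n))).card
      = n.choose (k + 1) := by
    rw [Finset.card_powersetCard]
    simp
  have hcases : k + 1 = n ∨ k + 1 = n - 1 ∨ (k + 1 = n - 2 ∧ 3 ≤ n) ∨ n = 0 := by omega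
  rcases hcases with hc | hc | ⟨hc, hn3⟩ | hc
  · -- k + 1 = n : a single facet
    have hcard1 : (Finset.powersetCard (k + 1) (Finset.univ : Finset (Fin n))).card = 1 := by
      rw [hcardpc, hc, Nat.choose_self]
    have hs0 : s = 0 := by omega
    subst hs0
    refine ⟨Finset.univ, ?_, fun i => Fin.elim0 i, ?_⟩
    · rw [Finset.mem_powersetCard]
      refine ⟨Finset.Subset.refl _, ?_⟩
      rw [hc]
      simp
    · exact SkelAux.isShellingOrder_snoc hshell (fun i => Fin.elim0 i)
  · -- k + 1 = n - 1 : any order works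
    obtain ⟨A, hA, hfresh⟩ := SkelAux.exists_fresh F hlt
    refine ⟨A, hA, hfresh, ?_⟩
    refine SkelAux.m1_shelling _ (SkelAux.snoc_injective hinj hfresh) ?_
    intro i
    rcases Fin.eq_castSucc_or_eq_last i with ⟨i', rfl⟩ | rfl
    · rw [Fin.snoc_castSucc, ← hc]
      exact hmem i'
    · rw [Fin.snoc_last, ← hc]
      exact hA
  · -- k + 1 = n - 2 : the main case
    exact SkelAux.m2_step hc hn3 F (fun i => Finset.univ \ F i) (fun i => rfl)
      hinj hmem hshell hlt
  · -- n = 0 : no facets at all, vacuous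
    exfalso
    subst hc
    rw [hcardpc, Nat.choose_eq_zero_of_lt (by omega)] at hlt
    omega
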